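/- Let R = k[x₁,…,xₙ] act on Γ = k[X₁,…,Xₙ] by the apolarity (contraction) action x^α ∘ X^β = (β!/(β−α)!) X^{β−α} if β ≥ α componentwise and 0 otherwise. Then the largest reduced R-submodule of Γ is k (the constants); i.e., an element f ∈ Γ satisfies (∀ a ∈ R, a² ∘ f = 0 → a ∘ f = 0) if and only if f ∈ k. -/

import Mathlib

open MvPolynomial

section Aux

variable {k : Type*} [Field k] [CharZero k] {n : ℕ}

lemma coeff_pderiv_aux (i : Fin n) (γ : Fin n →₀ ℕ) (f : MvPolynomial (Fin n) k) :
    coeff γ (pderiv i f) = (γ i + 1 : ℕ) * coeff (γ + Finsupp.single i 1) f := by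
  induction f using MvPolynomial.induction_on' with
  | monomial s a =>
    rw [pderiv_monomial]
    classical
    rw [coeff_monomial, coeff_monomial]
    by_cases h : s = γ + Finsupp.single i 1
    · subst h
      have h1 : (γ + Finsupp.single i 1) - Finsupp.single i 1 = γ := by
        simp
      have h2 : (γ + Finsupp.single i 1 : Fin n →₀ ℕ) i = γ i + 1 := by simp
      rw [if_pos h1, if_pos rfl, h2]
      push_cast
      ring
    · rw [if_neg h]
      by_cases h' : s - Finsupp.single i 1 = γ
      · have hsi : s i = 0 := by
          by_contra hsi
          apply h
          rw [← h', tsub_add_cancel_of_le]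
          exact Finsupp.single_le_iff.mpr (Nat.one_le_iff_ne_zero.mpr hsi)
        rw [if_pos h', hsi]
        simp
      · rw [if_neg h']
        ring
  | add p q hp hq => simp [map_add, hp, hq, mul_add]

variable (φ : MvPolynomial (Fin n) k →ₐ[k] Module.End k (MvPolynomial (Fin n) k))
  (hφ : ∀ i : Fin n, φ (X i) = (pderiv i).toLinearMap)

include hφ in
lemma coeff_phi_monomial (β γ : Fin n →₀ ℕ) (f : MvPolynomial (Fin n) k) :
    coeff γ (φ (monomial β 1) f) =
      ((∏ j : Fin n, (γ j + β j).descFactorial (β j) : ℕ) : k) * coeff (γ + β) f := by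
  classical
  -- step lemma: increment by single i 1
  have step : ∀ (β : Fin n →₀ ℕ),
      (∀ (γ : Fin n →₀ ℕ) (f : MvPolynomial (Fin n) k), coeff γ (φ (monomial β 1) f) =
        ((∏ j : Fin n, (γ j + β j).descFactorial (β j) : ℕ) : k) * coeff (γ + β) f) →
      ∀ (i : Fin n) (γ : Fin n →₀ ℕ) (f : MvPolynomial (Fin n) k),
        coeff γ (φ (monomial (β + Finsupp.single i 1) 1) f) =
        ((∏ j : Fin n, (γ j + (β + Finsupp.single i 1 : Fin n →₀ ℕ) j).descFactorial
          ((β + Finsupp.single i 1 : Fin n →₀ ℕ) j) : ℕ) : k) *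
          coeff (γ + (β + Finsupp.single i 1)) f := by
    intro β ih i γ f
    have hmon : (monomial (β + Finsupp.single i 1) (1 : k)) = monomial β 1 * X i := by
      rw [X, monomial_mul, mul_one]
    have happ : φ (monomial (β + Finsupp.single i 1) 1) f
        = φ (monomial β 1) (pderiv i f) := by
      rw [hmon, map_mul, hφ i]
      rfl
    rw [happ, ih γ (pderiv i f), coeff_pderiv_aux]
    have hadd : γ + β + Finsupp.single i 1 = γ + (β + Finsupp.single i 1) := by
      rw [add_assoc]
    rw [hadd]
    have hprod : (∏ j : Fin n, (γ j + (β + Finsupp.single i 1 : Fin n →₀ ℕ) j).descFactorial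
          ((β + Finsupp.single i 1 : Fin n →₀ ℕ) j))
        = ((γ + β : Fin n →₀ ℕ) i + 1) * ∏ j : Fin n, (γ j + β j).descFactorial (β j) := by
      rw [← Finset.mul_prod_erase Finset.univ _ (Finset.mem_univ i),
        ← Finset.mul_prod_erase Finset.univ
          (fun j => (γ j + β j).descFactorial (β j)) (Finset.mem_univ i)]
      have h1 : ∀ j ∈ Finset.univ.erase i,
          (γ j + (β + Finsupp.single i 1 : Fin n →₀ ℕ) j).descFactorial
            ((β + Finsupp.single i 1 : Fin n →₀ ℕ) j)
            = (γ j + β j).descFactorial (β j) := by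
        intro j hj
        have hji : j ≠ i := (Finset.mem_erase.mp hj).1
        simp [Finsupp.single_apply, Ne.symm hji]
      rw [Finset.prod_congr rfl h1]
      have h2 : (γ i + (β + Finsupp.single i 1 : Fin n →₀ ℕ) i) = (γ i + β i) + 1 := by
        simp
        omega
      have h3 : (β + Finsupp.single i 1 : Fin n →₀ ℕ) i = β i + 1 := by simp
      have h4 : (γ + β : Fin n →₀ ℕ) i + 1 = γ i + β i + 1 := by
        rw [Finsupp.add_apply]
      rw [h2, h3, Nat.succ_descFactorial_succ, h4, mul_assoc]
    rw [hprod]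
    push_cast
    ring
  -- main induction on β
  induction β using Finsupp.induction generalizing γ f with
  | zero =>
    have h0 : (monomial (0 : Fin n →₀ ℕ) (1 : k)) = 1 := by simp
    rw [h0, map_one]
    simp
  | single_add a b β ha hb ih =>
    clear ha hb
    -- inner induction on b
    induction b generalizing γ f with
    | zero => simpa using ih γ f
    | succ m ihm =>
      have h : Finsupp.single a (m + 1) + β = (Finsupp.single a m + β) + Finsupp.single a 1 := by
        ext j
        by_cases hja : a = j <;> simp [Finsupp.single_apply, hja] <;> omega
      rw [h]
      exact step _ ihm a γ f

end Aux

/-- Let `R = k[x₁,…,xₙ]` act on `Γ = k[X₁,…,Xₙ]` by the apolarity action, i.e. via the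
`k`-algebra homomorphism `φ : R → End_k(Γ)` sending each `xᵢ` to the partial derivative
`∂/∂Xᵢ`.  Then the largest reduced `R`-submodule of `Γ` is `k`: an element `f ∈ Γ`
satisfies `∀ a ∈ R, a² ∘ f = 0 → a ∘ f = 0` if and only if `f` is a constant. -/
theorem largest_reduced_submodule_eq_constants {k : Type*} [Field k] [CharZero k] {n : ℕ}
    (φ : MvPolynomial (Fin n) k →ₐ[k] Module.End k (MvPolynomial (Fin n) k))
    (hφ : ∀ i : Fin n, φ (X i) = (pderiv i).toLinearMap)
    (f : MvPolynomial (Fin n) k) :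
    (∀ a : MvPolynomial (Fin n) k, φ (a ^ 2) f = 0 → φ a f = 0) ↔ ∃ c : k, f = C c := by
  constructor
  · intro hred
    -- claim: totalDegree f = 0
    have hdeg : f.totalDegree = 0 := by
      by_contra hd
      have hf0 : f ≠ 0 := by
        intro h; exact hd (by simp [h])
      obtain ⟨β, hβmem, hβdeg⟩ := Finset.exists_mem_eq_sup f.support
        (support_nonempty.mpr hf0) (fun s => s.sum fun _ e => e)
      have hsq : (monomial β (1 : k)) ^ 2 = monomial (β + β) 1 := by
        rw [sq, monomial_mul, mul_one]
      have hzero : φ ((monomial β (1 : k)) ^ 2) f = 0 := by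
        rw [hsq]
        ext γ
        rw [coeff_phi_monomial φ hφ]
        have hc0 : coeff (γ + (β + β)) f = 0 := by
          by_contra hc
          have hmem : γ + (β + β) ∈ f.support := mem_support_iff.mpr hc
          have hle := le_totalDegree hmem
          have hsum : ((γ + (β + β)).sum fun _ e => e) =
              (γ.sum fun _ e => e) + ((β.sum fun _ e => e) + (β.sum fun _ e => e)) := by
            rw [Finsupp.sum_add_index' (fun _ => rfl) (fun _ _ _ => rfl),
              Finsupp.sum_add_index' (fun _ => rfl) (fun _ _ _ => rfl)]
          have hβdeg' : f.totalDegree = β.sum fun _ e => e := hβdeg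
          rw [hsum, hβdeg'] at hle
          rw [hβdeg'] at hd
          omega
        simp [hc0]
      have h1 := hred _ hzero
      have h2 := coeff_phi_monomial φ hφ β 0 f
      rw [h1, coeff_zero, zero_add] at h2
      have hprodsimp : ∀ j : Fin n, ((0 : Fin n →₀ ℕ) j + β j) = β j := by
        intro j; simp
      simp only [hprodsimp, Nat.descFactorial_self] at h2
      have hfact : ((∏ j : Fin n, (β j).factorial : ℕ) : k) ≠ 0 :=
        Nat.cast_ne_zero.mpr (Finset.prod_ne_zero_iff.mpr fun j _ => Nat.factorial_ne_zero _)
      have hcoeff : coeff β f ≠ 0 := mem_support_iff.mp hβmem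
      rcases mul_eq_zero.mp h2.symm with h | h
      · exact hfact h
      · exact hcoeff h
    refine ⟨coeff 0 f, ?_⟩
    ext γ
    rw [coeff_C]
    by_cases h : (0 : Fin n →₀ ℕ) = γ
    · rw [if_pos h, ← h]
    · rw [if_neg h]
      by_contra hc
      have hmem : γ ∈ f.support := mem_support_iff.mpr hc
      have hz := (totalDegree_eq_zero_iff (Fin n) f).mp hdeg γ hmem
      apply h
      ext i
      simp [hz i]
  · rintro ⟨c, rfl⟩
    have key : ∀ a : MvPolynomial (Fin n) k, φ a (C c) = C (coeff 0 a * c) := by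
      intro a
      induction a using MvPolynomial.induction_on' with
      | monomial s r =>
        have hm1 : (monomial s r : MvPolynomial (Fin n) k) = r • monomial s 1 := by
          rw [smul_monomial, smul_eq_mul, mul_one]
        have h2 : φ (monomial s 1) (C c) = if s = 0 then C c else 0 := by
          split_ifs with hs
          · subst hs
            have h0 : (monomial (0 : Fin n →₀ ℕ) (1 : k)) = 1 := by simp
            rw [h0, map_one]; rfl
          · ext γ
            rw [coeff_phi_monomial φ hφ]
            have hz : coeff (γ + s) (C c) = 0 := by
              rw [coeff_C, if_neg]
              intro h
              apply hs
              ext i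
              have := DFunLike.congr_fun h.symm i
              simp only [Finsupp.coe_zero, Pi.zero_apply, Finsupp.coe_add,
                Pi.add_apply] at this
              simp only [Finsupp.zero_apply]
              omega
            simp [hz]
        have happ : φ (monomial s r) (C c) = r • (φ (monomial s 1) (C c)) := by
          rw [hm1, map_smul, LinearMap.smul_apply]
        rw [happ, h2, coeff_monomial]
        classical
        split_ifs with hs
        · rw [smul_eq_C_mul, ← C_mul]
        · simp
      | add p q hp hq =>
        rw [map_add, LinearMap.add_apply, hp, hq, coeff_add, add_mul, ← C_add]
    intro a ha
    rw [key] at ha ⊢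
    have h0 : coeff 0 (a ^ 2) = (coeff 0 a) ^ 2 := by
      have hcc : coeff (0 : Fin n →₀ ℕ) (a ^ 2) = constantCoeff (a ^ 2) := rfl
      rw [hcc, map_pow]
      rfl
    rw [h0] at ha
    have h1 : (coeff 0 a) ^ 2 * c = 0 := by
      have := ha
      rwa [← map_zero (C : k →+* MvPolynomial (Fin n) k), C_inj] at this
    have h2 : coeff 0 a * c = 0 := by
      rcases mul_eq_zero.mp h1 with h | h
      · rw [pow_eq_zero_iff (two_ne_zero) |>.mp h, zero_mul]
      · rw [h, mul_zero]
    rw [h2, map_zero]
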